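/- Let α, β, γ : ℝ → ℝ be functions of the time step ε with α(ε) ≠ 0 and α(−ε) ≠ 0, and let A(ε) = [[β(ε)/α(ε), 1/α(ε)], [γ(ε)β(ε) − (α(ε)² + β(ε)²)/α(ε), γ(ε) − β(ε)/α(ε)]]. Then A(−ε) = A(ε)⁻¹ (time-reversibility of the map) holds if and only if α(−ε) = −α(ε) and γ(ε) = (β(ε) − β(−ε))/α(ε). -/

import Mathlib

lemma inv_explicit (a b g : ℝ) (ha : a ≠ 0) :
    (!![b / a, 1 / a; g * b - (a ^ 2 + b ^ 2) / a, g - b / a] : Matrix (Fin 2) (Fin 2) ℝ)⁻¹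
      = !![g - b / a, -(1 / a); -(g * b - (a ^ 2 + b ^ 2) / a), b / a] := by
  apply Matrix.inv_eq_right_inv
  ext i j
  fin_cases i <;> fin_cases j <;>
    simp [Matrix.mul_apply, Fin.sum_univ_two] <;> field_simp <;> ring

/-- Time-reversibility criterion: for the family of linear maps with matrix
`A(ε) = [[β/α, 1/α], [γβ - (α² + β²)/α, γ - β/α]]` (all coefficients functions of `ε`),
one has `A(-ε) = A(ε)⁻¹` for all `ε` if and only if
`α(-ε) = -α(ε)` and `γ(ε) = (β(ε) - β(-ε))/α(ε)` for all `ε`. -/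
theorem time_reversibility_criterion
    (α β γ : ℝ → ℝ) (hα : ∀ ε : ℝ, α ε ≠ 0)
    (A : ℝ → Matrix (Fin 2) (Fin 2) ℝ)
    (hA : ∀ ε : ℝ, A ε
      = !![β ε / α ε, 1 / α ε;
           γ ε * β ε - (α ε ^ 2 + β ε ^ 2) / α ε, γ ε - β ε / α ε]) :
    (∀ ε : ℝ, A (-ε) = (A ε)⁻¹) ↔
      ((∀ ε : ℝ, α (-ε) = -α ε) ∧ (∀ ε : ℝ, γ ε = (β ε - β (-ε))/α ε)) := by
  have key : ∀ ε, (A ε)⁻¹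
      = !![γ ε - β ε / α ε, -(1 / α ε);
           -(γ ε * β ε - (α ε ^ 2 + β ε ^ 2) / α ε), β ε / α ε] := by
    intro ε; rw [hA ε, inv_explicit _ _ _ (hα ε)]
  constructor
  · intro h
    have hαneg : ∀ ε : ℝ, α (-ε) = -α ε := by
      intro ε
      have := h ε
      rw [hA (-ε), key ε] at this
      have h01 := congrFun (congrFun this 0) 1
      simp at h01
      field_simp [hα ε, hα (-ε)] at h01
      linarith
    refine ⟨hαneg, fun ε => ?_⟩
    have := h ε
    rw [hA (-ε), key ε] at this
    have h00 := congrFun (congrFun this 0) 0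
    simp only [Matrix.cons_val', Matrix.cons_val_zero, Matrix.empty_val',
      Matrix.cons_val_fin_one, Matrix.cons_val_one, Matrix.head_cons,
      Matrix.head_fin_const, Matrix.of_apply] at h00
    rw [hαneg ε] at h00
    field_simp [hα ε] at h00 ⊢
    have h' : β (-ε) * α ε = (β ε - γ ε * α ε) * α ε := by linear_combination (-α ε) * h00
    have := mul_right_cancel₀ (hα ε) h'
    linarith
  · rintro ⟨h1, h2⟩ ε
    rw [hA (-ε), key ε, h1 ε]
    have hg := h2 ε
    have hg' := h2 (-ε)
    rw [neg_neg, h1 ε] at hg'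
    ext i j
    fin_cases i <;> fin_cases j <;>
      simp only [hg, hg', Matrix.cons_val', Matrix.cons_val_zero, Matrix.empty_val',
        Matrix.cons_val_fin_one, Matrix.cons_val_one, Matrix.head_cons,
        Matrix.head_fin_const, Matrix.of_apply] <;> field_simp <;> ring
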